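/- arXiv:2104.05802 — 5 statements merged into one kernel-verified Lean document; each statement's English description precedes it below -/
import Mathlib

section
/- Let m, n ≥ 1, μ ∈ ℝ^m and ν ∈ ℝⁿ be probability vectors, C = (c_{ij}) ∈ ℝ^{m×n}, λ > 0, and let E_λ(ψ) = λ Σ_{i=1}^m μ_i log(Σ_{j=1}^n e^{(ψ_j − c_{ij})/λ}) − Σ_{j=1}^n ν_j ψ_j − λ log n. Suppose ψ* ∈ ℝⁿ is a critical point of E_λ (i.e., ∇E_λ(ψ*) = 0; in particular any minimizer of E_λ). Then the matrix P* with entries P*_{ij} = μ_i · e^{(ψ*_j − c_{ij})/λ} / (Σ_{k=1}^n e^{(ψ*_k − c_{ik})/λ}) belongs to the admissible set π(μ, ν): it has nonnegative entries, Σ_{j=1}^n P*_{ij} = μ_i for every i, and Σ_{i=1}^m P*_{ij} = ν_j for every j. -/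
/-- If `ψ*` is a critical point of the smoothed Kantorovich functional `E_λ`
(in particular, any minimizer), then the induced plan
`P*_{ij} = μ_i e^{(ψ*_j - c_{ij})/λ} / (∑ k, e^{(ψ*_k - c_{ik})/λ})` lies in the admissible
set `π(μ, ν)`: nonnegative entries, rows summing to `μ` and columns summing to `ν`. -/
theorem critical_point_plan_admissible
    (m n : ℕ) (hm : 1 ≤ m) (hn : 1 ≤ n)
    (μ : Fin m → ℝ) (ν : Fin n → ℝ)
    (hμ0 : ∀ i, 0 ≤ μ i) (hμ1 : ∑ i, μ i = 1)
    (hν0 : ∀ j, 0 ≤ ν j) (hν1 : ∑ j, ν j = 1)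
    (C : Fin m → Fin n → ℝ) (lam : ℝ) (hlam : 0 < lam)
    (Elam : (Fin n → ℝ) → ℝ)
    (hElam : ∀ ψ, Elam ψ =
      lam * ∑ i, μ i * Real.log (∑ j, Real.exp ((ψ j - C i j) / lam))
        - ∑ j, ν j * ψ j - lam * Real.log n)
    (ψs : Fin n → ℝ) (hcrit : fderiv ℝ Elam ψs = 0)
    (P : Fin m → Fin n → ℝ)
    (hP : ∀ i j, P i j = μ i * (Real.exp ((ψs j - C i j) / lam) /
      ∑ k, Real.exp ((ψs k - C i k) / lam))) :
    (∀ i j, 0 ≤ P i j) ∧ (∀ i, ∑ j, P i j = μ i) ∧ ∀ j, ∑ i, P i j = ν j := by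
  have hnne : Nonempty (Fin n) := ⟨⟨0, by omega⟩⟩
  have hSpos : ∀ i, 0 < ∑ k, Real.exp ((ψs k - C i k) / lam) := fun i =>
    Finset.sum_pos (fun k _ => Real.exp_pos _) Finset.univ_nonempty
  have h0 : ∀ i j, 0 ≤ P i j := by
    intro i j; rw [hP]
    exact mul_nonneg (hμ0 i) (div_nonneg (Real.exp_pos _).le (hSpos i).le)
  have hrow : ∀ i, ∑ j, P i j = μ i := by
    intro i
    simp only [hP]
    rw [← Finset.mul_sum, ← Finset.sum_div, div_self (hSpos i).ne', mul_one]
  refine ⟨h0, hrow, ?_⟩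
  set L : (Fin n → ℝ) →L[ℝ] ℝ :=
    lam • (∑ i, μ i • ((∑ k, Real.exp ((ψs k - C i k) / lam))⁻¹ •
        (∑ k, Real.exp ((ψs k - C i k) / lam) •
          (lam⁻¹ • (ContinuousLinearMap.proj k : (Fin n → ℝ) →L[ℝ] ℝ)))))
      - ∑ j, ν j • (ContinuousLinearMap.proj j : (Fin n → ℝ) →L[ℝ] ℝ) with hLdef
  have hD : HasFDerivAt Elam L ψs := by
    have hE : Elam = fun ψ =>
        lam * ∑ i, μ i * Real.log (∑ j, Real.exp ((ψ j - C i j) / lam))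
          - ∑ j, ν j * ψ j - lam * Real.log n := funext hElam
    rw [hE]
    have h1 : ∀ i : Fin m, HasFDerivAt
        (fun ψ : Fin n → ℝ => ∑ k, Real.exp ((ψ k - C i k) / lam))
        (∑ k, Real.exp ((ψs k - C i k) / lam) •
          (lam⁻¹ • (ContinuousLinearMap.proj k : (Fin n → ℝ) →L[ℝ] ℝ))) ψs := by
      intro i
      refine HasFDerivAt.fun_sum (fun k _ => ?_)
      have hproj := (ContinuousLinearMap.proj (R := ℝ) (φ := fun _ : Fin n => ℝ) k).hasFDerivAt (x := ψs)
      have haff : HasFDerivAt (fun ψ : Fin n → ℝ => (ψ k - C i k) / lam)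
          (lam⁻¹ • (ContinuousLinearMap.proj k : (Fin n → ℝ) →L[ℝ] ℝ)) ψs := by
        simpa [div_eq_inv_mul, ContinuousLinearMap.proj_apply] using
          ((hproj.sub_const (C i k)).const_mul lam⁻¹)
      simpa using haff.exp
    have h2 : HasFDerivAt
        (fun ψ : Fin n → ℝ => lam * ∑ i, μ i * Real.log (∑ j, Real.exp ((ψ j - C i j) / lam)))
        (lam • (∑ i, μ i • ((∑ k, Real.exp ((ψs k - C i k) / lam))⁻¹ •
          (∑ k, Real.exp ((ψs k - C i k) / lam) •
            (lam⁻¹ • (ContinuousLinearMap.proj k : (Fin n → ℝ) →L[ℝ] ℝ)))))) ψs := by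
      refine HasFDerivAt.const_mul (HasFDerivAt.fun_sum (fun i _ => ?_)) lam
      exact ((h1 i).log (hSpos i).ne').const_mul (μ i)
    have h3 : HasFDerivAt (fun ψ : Fin n → ℝ => ∑ j, ν j * ψ j)
        (∑ j, ν j • (ContinuousLinearMap.proj j : (Fin n → ℝ) →L[ℝ] ℝ)) ψs :=
      HasFDerivAt.fun_sum (fun j _ => by
        simpa [ContinuousLinearMap.proj_apply] using
          ((ContinuousLinearMap.proj (R := ℝ) (φ := fun _ : Fin n => ℝ) j).hasFDerivAt
            (x := ψs)).const_mul (ν j))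
    exact (h2.sub h3).sub_const _
  have hL0 : L = 0 := by rw [← hD.fderiv, hcrit]
  intro j
  have hLj : L (Pi.single j 1) = 0 := by rw [hL0]; rfl
  have hval : L (Pi.single j 1) =
      lam * ∑ i, μ i * ((∑ k, Real.exp ((ψs k - C i k) / lam))⁻¹ *
        (Real.exp ((ψs j - C i j) / lam) * lam⁻¹)) - ν j := by
    simp only [hLdef, ContinuousLinearMap.sub_apply, ContinuousLinearMap.smul_apply,
      ContinuousLinearMap.sum_apply, ContinuousLinearMap.proj_apply, smul_eq_mul]
    congr 1
    · congr 1
      refine Finset.sum_congr rfl (fun i _ => ?_)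
      congr 2
      rw [Finset.sum_eq_single j]
      · simp
      · intro k _ hk; simp [Pi.single_apply, hk]
      · simp
    · rw [Finset.sum_eq_single j]
      · simp
      · intro k _ hk; simp [Pi.single_apply, hk]
      · simp
  have key : lam * ∑ i, μ i * ((∑ k, Real.exp ((ψs k - C i k) / lam))⁻¹ *
      (Real.exp ((ψs j - C i j) / lam) * lam⁻¹)) = ν j := by
    have := hval.symm.trans hLj
    linarith
  rw [← key, Finset.mul_sum]
  refine Finset.sum_congr rfl (fun i _ => ?_)
  rw [hP]
  field_simp
end

section
/- Let m, n ≥ 1, let μ ∈ ℝ^m and ν ∈ ℝⁿ be probability vectors with all entries of μ nonnegative and at least one entry of μ positive, let C = (c_{ij}) ∈ ℝ^{m×n} and λ > 0, and let E_λ(ψ) = λ Σ_{i=1}^m μ_i log(Σ_{j=1}^n e^{(ψ_j − c_{ij})/λ}) − Σ_{j=1}^n ν_j ψ_j − λ log n. Then for every ψ ∈ ℝⁿ and every nonzero u ∈ ℝⁿ with Σ_{j=1}^n u_j = 0, the second derivative of E_λ at ψ in the direction u is strictly positive: uᵀ ∇²E_λ(ψ) u > 0. In particular, E_λ is strictly convex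 on the hyperplane H = {ψ ∈ ℝⁿ : Σ_j ψ_j = 0}. -/
open Finset

noncomputable section

namespace SKaux

variable {n m : ℕ}

def pr (n : ℕ) (j : Fin n) : (Fin n → ℝ) →L[ℝ] ℝ := ContinuousLinearMap.proj j

@[simp] lemma pr_apply (j : Fin n) (v : Fin n → ℝ) : pr n j v = v j := rfl

def S (lam : ℝ) (c : Fin n → ℝ) (ψ : Fin n → ℝ) : ℝ :=
  ∑ j, Real.exp ((ψ j - c j) / lam)

def P (lam : ℝ) (c ψ : Fin n → ℝ) (j : Fin n) : ℝ :=
  Real.exp ((ψ j - c j) / lam) / S lam c ψ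

lemma S_pos (hn : 0 < n) (lam : ℝ) (c ψ : Fin n → ℝ) : 0 < S lam c ψ := by
  have : Nonempty (Fin n) := Fin.pos_iff_nonempty.mp hn
  exact Finset.sum_pos (fun j _ => Real.exp_pos _) Finset.univ_nonempty

lemma P_pos (hn : 0 < n) (lam : ℝ) (c ψ : Fin n → ℝ) (j : Fin n) :
    0 < P lam c ψ j := div_pos (Real.exp_pos _) (S_pos hn lam c ψ)

lemma P_sum (hn : 0 < n) (lam : ℝ) (c ψ : Fin n → ℝ) :
    ∑ j, P lam c ψ j = 1 := by
  have hne := (S_pos hn lam c ψ).ne'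
  simp only [P]
  rw [← Finset.sum_div]
  exact div_self hne

def Sd (lam : ℝ) (c ψ : Fin n → ℝ) : (Fin n → ℝ) →L[ℝ] ℝ :=
  ∑ j, (Real.exp ((ψ j - c j) / lam) * lam⁻¹) • pr n j

def Pd (lam : ℝ) (c ψ : Fin n → ℝ) (j : Fin n) : (Fin n → ℝ) →L[ℝ] ℝ :=
  (P lam c ψ j * lam⁻¹) • (pr n j - ∑ k, P lam c ψ k • pr n k)

lemma hasE (lam : ℝ) (c ψ : Fin n → ℝ) (j : Fin n) :
    HasFDerivAt (fun ψ : Fin n → ℝ => Real.exp ((ψ j - c j) / lam))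
      ((Real.exp ((ψ j - c j) / lam) * lam⁻¹) • pr n j) ψ := by
  have h0 : HasFDerivAt (fun ψ : Fin n → ℝ => (ψ j - c j) * lam⁻¹)
      (lam⁻¹ • pr n j) ψ :=
    ((hasFDerivAt_apply (𝕜 := ℝ) j ψ).sub_const (c j)).mul_const lam⁻¹
  have h1 : HasFDerivAt (fun ψ : Fin n → ℝ => (ψ j - c j) / lam)
      (lam⁻¹ • pr n j) ψ := by simpa [div_eq_mul_inv] using h0
  simpa [smul_smul] using h1.exp

lemma hasS (lam : ℝ) (c ψ : Fin n → ℝ) :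
    HasFDerivAt (S lam c) (Sd lam c ψ) ψ :=
  HasFDerivAt.fun_sum (fun j _ => hasE lam c ψ j)

lemma sum_P_mul (lam : ℝ) (c ψ v : Fin n → ℝ) :
    ∑ k, P lam c ψ k * v k = (∑ k, Real.exp ((ψ k - c k) / lam) * v k) / S lam c ψ := by
  rw [Finset.sum_div]
  exact Finset.sum_congr rfl fun k _ => (div_mul_eq_mul_div _ _ _).trans rfl

lemma hasP (hn : 0 < n) {lam : ℝ} (hlam : 0 < lam) (c ψ : Fin n → ℝ) (j : Fin n) :
    HasFDerivAt (fun ψ => P lam c ψ j) (Pd lam c ψ j) ψ := by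
  have hSne : S lam c ψ ≠ 0 := (S_pos hn lam c ψ).ne'
  have hinv : HasFDerivAt (fun ψ => (S lam c ψ)⁻¹)
      ((-(S lam c ψ ^ 2)⁻¹) • Sd lam c ψ) ψ :=
    (hasDerivAt_inv hSne).comp_hasFDerivAt ψ (hasS lam c ψ)
  have hmul := (hasE lam c ψ j).mul hinv
  have hfun : (fun ψ : Fin n → ℝ => P lam c ψ j)
      = fun ψ => Real.exp ((ψ j - c j) / lam) * (S lam c ψ)⁻¹ := by
    funext φ; simp [P, div_eq_mul_inv]
  rw [hfun]
  refine HasFDerivAt.congr_fderiv hmul ?_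
  ext v
  have hs1 := sum_P_mul lam c ψ v
  simp only [Pd, Sd, ContinuousLinearMap.smul_apply, ContinuousLinearMap.sub_apply,
    ContinuousLinearMap.sum_apply, ContinuousLinearMap.add_apply, pr_apply, smul_eq_mul]
  rw [hs1]
  have hs2 : ∑ k, Real.exp ((ψ k - c k) / lam) * lam⁻¹ * v k
      = (∑ k, Real.exp ((ψ k - c k) / lam) * v k) * lam⁻¹ := by
    rw [Finset.sum_mul]; exact Finset.sum_congr rfl fun k _ => by ring
  rw [hs2]
  simp only [P]
  have hlne : lam ≠ 0 := hlam.ne'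
  field_simp
  ring

def D1 (μ : Fin m → ℝ) (ν : Fin n → ℝ) (C : Fin m → Fin n → ℝ) (lam : ℝ)
    (ψ : Fin n → ℝ) : (Fin n → ℝ) →L[ℝ] ℝ :=
  ∑ j, ((∑ i, μ i * P lam (C i) ψ j) - ν j) • pr n j

def D2 (μ : Fin m → ℝ) (C : Fin m → Fin n → ℝ) (lam : ℝ)
    (ψ : Fin n → ℝ) : (Fin n → ℝ) →L[ℝ] ((Fin n → ℝ) →L[ℝ] ℝ) :=
  ∑ j, (∑ i, μ i • Pd lam (C i) ψ j).smulRight (pr n j)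

lemma hasD1 (hn : 0 < n) (μ : Fin m → ℝ) (ν : Fin n → ℝ) (C : Fin m → Fin n → ℝ)
    {lam : ℝ} (hlam : 0 < lam) (r : ℝ) (ψ : Fin n → ℝ) :
    HasFDerivAt (fun ψ => lam * ∑ i, μ i * Real.log (S lam (C i) ψ) - ∑ j, ν j * ψ j - r)
      (D1 μ ν C lam ψ) ψ := by
  have h1 : HasFDerivAt (fun ψ => lam * ∑ i, μ i * Real.log (S lam (C i) ψ))
      (lam • ∑ i, μ i • ((S lam (C i) ψ)⁻¹ • Sd lam (C i) ψ)) ψ :=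
    (HasFDerivAt.fun_sum (fun i _ =>
      ((hasS lam (C i) ψ).log (S_pos hn lam (C i) ψ).ne').const_mul (μ i))).const_mul lam
  have h2 : HasFDerivAt (fun ψ : Fin n → ℝ => ∑ j, ν j * ψ j) (∑ j, ν j • pr n j) ψ :=
    HasFDerivAt.fun_sum (fun j _ => (hasFDerivAt_apply (𝕜 := ℝ) j ψ).const_mul (ν j))
  have h3 := (h1.sub h2).sub_const r
  refine HasFDerivAt.congr_fderiv h3 ?_
  ext v
  simp only [D1, Sd, ContinuousLinearMap.sum_apply, ContinuousLinearMap.smul_apply,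
    ContinuousLinearMap.sub_apply, pr_apply, smul_eq_mul, sub_mul, Finset.sum_sub_distrib]
  congr 1
  simp_rw [Finset.sum_mul]
  rw [Finset.sum_comm, Finset.mul_sum]
  apply Finset.sum_congr rfl
  intro i _
  have hs1 := sum_P_mul lam (C i) ψ v
  have hs2 : ∑ k, Real.exp ((ψ k - C i k) / lam) * lam⁻¹ * v k
      = (∑ k, Real.exp ((ψ k - C i k) / lam) * v k) * lam⁻¹ := by
    rw [Finset.sum_mul]; exact Finset.sum_congr rfl fun k _ => by ring
  have hL : ∑ j, μ i * P lam (C i) ψ j * v j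
      = μ i * ((∑ j, Real.exp ((ψ j - C i j) / lam) * v j) / S lam (C i) ψ) := by
    rw [← hs1, Finset.mul_sum]
    exact Finset.sum_congr rfl fun j _ => by ring
  rw [hL, hs2]
  have hSne : S lam (C i) ψ ≠ 0 := (S_pos hn lam (C i) ψ).ne'
  have hlne : lam ≠ 0 := hlam.ne'
  field_simp

lemma hasD2 (hn : 0 < n) (μ : Fin m → ℝ) (ν : Fin n → ℝ) (C : Fin m → Fin n → ℝ)
    {lam : ℝ} (hlam : 0 < lam) (ψ : Fin n → ℝ) :
    HasFDerivAt (fun ψ => D1 μ ν C lam ψ) (D2 μ C lam ψ) ψ := by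
  apply HasFDerivAt.fun_sum
  intro j _
  exact ((HasFDerivAt.fun_sum (fun i _ =>
    (hasP hn hlam (C i) ψ j).const_mul (μ i))).sub_const (ν j)).smul_const (pr n j)


lemma D2_apply (μ : Fin m → ℝ) (C : Fin m → Fin n → ℝ) (lam : ℝ) (ψ u v : Fin n → ℝ) :
    D2 μ C lam ψ u v
      = ∑ j, (∑ i, μ i * (P lam (C i) ψ j * lam⁻¹ * (u j - ∑ k, P lam (C i) ψ k * u k))) * v j := by
  simp [D2, Pd, ContinuousLinearMap.sum_apply, ContinuousLinearMap.smulRight_apply,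
    ContinuousLinearMap.smul_apply, ContinuousLinearMap.sub_apply, pr_apply, smul_eq_mul,
    mul_sub]

lemma quad_pos (hn : 0 < n) {lam : ℝ} (hlam : 0 < lam) {μ : Fin m → ℝ}
    (hμ0 : ∀ i, 0 ≤ μ i) (hμpos : ∃ i, 0 < μ i) (C : Fin m → Fin n → ℝ)
    (ψ u : Fin n → ℝ) (hu : u ≠ 0) (hsum : ∑ j, u j = 0) :
    0 < D2 μ C lam ψ u u := by
  set M : Fin m → ℝ := fun i => ∑ k, P lam (C i) ψ k * u k with hM
  have expand : D2 μ C lam ψ u u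
      = ∑ i, μ i * (lam⁻¹ * ∑ j, P lam (C i) ψ j * (u j - M i) ^ 2) := by
    rw [D2_apply]
    simp_rw [Finset.sum_mul]
    rw [Finset.sum_comm]
    apply Finset.sum_congr rfl
    intro i _
    have h0 : ∑ j, P lam (C i) ψ j * (u j - M i) = 0 := by
      have hps := P_sum hn lam (C i) ψ
      simp only [mul_sub, Finset.sum_sub_distrib, ← Finset.sum_mul, hps, one_mul]
      simp [hM]
    have h1 : ∑ j, P lam (C i) ψ j * (u j - M i) * u j
        = ∑ j, P lam (C i) ψ j * (u j - M i) ^ 2 := by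
      have hterm : ∀ j, P lam (C i) ψ j * (u j - M i) * u j
          = P lam (C i) ψ j * (u j - M i) ^ 2 + P lam (C i) ψ j * (u j - M i) * M i :=
        fun j => by ring
      rw [Finset.sum_congr rfl (fun j _ => hterm j), Finset.sum_add_distrib,
        ← Finset.sum_mul, h0, zero_mul, add_zero]
    have h2 : ∑ j, μ i * (P lam (C i) ψ j * lam⁻¹ * (u j - M i)) * u j
        = μ i * (lam⁻¹ * ∑ j, P lam (C i) ψ j * (u j - M i) * u j) := by
      rw [Finset.mul_sum, Finset.mul_sum]
      exact Finset.sum_congr rfl fun j _ => by ring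
    rw [h2, h1]
  obtain ⟨i0, hi0⟩ := hμpos
  have hj0 : ∃ j0, u j0 - M i0 ≠ 0 := by
    by_contra hcon
    push_neg at hcon
    have hconst : ∀ j, u j = M i0 := fun j => by
      have := hcon j; linarith [sub_eq_zero.mp this]
    have hsum' : (n : ℝ) * M i0 = 0 := by
      rw [← hsum]
      rw [Finset.sum_congr rfl (fun j _ => hconst j)]
      simp [Finset.sum_const, Finset.card_univ, mul_comm]
    have hnne : (n : ℝ) ≠ 0 := Nat.cast_ne_zero.mpr hn.ne'
    have hM0 : M i0 = 0 := by
      rcases mul_eq_zero.mp hsum' with h | h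
      · exact absurd h hnne
      · exact h
    apply hu
    funext j
    simp [hconst j, hM0]
  obtain ⟨j0, hj0⟩ := hj0
  have hVpos : 0 < ∑ j, P lam (C i0) ψ j * (u j - M i0) ^ 2 := by
    apply Finset.sum_pos'
    · exact fun j _ => mul_nonneg (P_pos hn lam (C i0) ψ j).le (sq_nonneg _)
    · refine ⟨j0, Finset.mem_univ _, mul_pos (P_pos hn lam (C i0) ψ j0) ?_⟩
      positivity
  rw [expand]
  apply Finset.sum_pos'
  · intro i _
    apply mul_nonneg (hμ0 i)
    apply mul_nonneg (inv_nonneg.mpr hlam.le)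
    exact Finset.sum_nonneg fun j _ => mul_nonneg (P_pos hn lam (C i) ψ j).le (sq_nonneg _)
  · exact ⟨i0, Finset.mem_univ _, mul_pos hi0 (mul_pos (inv_pos.mpr hlam) hVpos)⟩

end SKaux

/-- If all entries of `μ` are nonnegative and at least one is positive, then
for every `ψ` and every nonzero direction `u` with `∑ j, u_j = 0`, the second derivative of
the smoothed Kantorovich functional `E_λ` at `ψ` in the direction `u` is strictly positive;
in particular `E_λ` is strictly convex on the hyperplane `H = {ψ : ∑ j, ψ_j = 0}`. -/
theorem smoothed_kantorovich_strictly_convex_on_hyperplane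
    (m n : ℕ) (hm : 1 ≤ m) (hn : 1 ≤ n)
    (μ : Fin m → ℝ) (ν : Fin n → ℝ)
    (hμ0 : ∀ i, 0 ≤ μ i) (hμ1 : ∑ i, μ i = 1) (hμpos : ∃ i, 0 < μ i)
    (hν0 : ∀ j, 0 ≤ ν j) (hν1 : ∑ j, ν j = 1)
    (C : Fin m → Fin n → ℝ) (lam : ℝ) (hlam : 0 < lam)
    (Elam : (Fin n → ℝ) → ℝ)
    (hElam : ∀ ψ, Elam ψ =
      lam * ∑ i, μ i * Real.log (∑ j, Real.exp ((ψ j - C i j) / lam))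
        - ∑ j, ν j * ψ j - lam * Real.log n) :
    (∀ (ψ u : Fin n → ℝ), u ≠ 0 → ∑ j, u j = 0 →
        0 < fderiv ℝ (fderiv ℝ Elam) ψ u u) ∧
      StrictConvexOn ℝ {ψ : Fin n → ℝ | ∑ j, ψ j = 0} Elam := by
  classical
  have hn0 : 0 < n := hn
  have hE' : Elam = fun ψ => lam * ∑ i, μ i * Real.log (SKaux.S lam (C i) ψ)
      - ∑ j, ν j * ψ j - lam * Real.log n := by
    funext ψ; rw [hElam]; rfl
  have hD1 : ∀ ψ, HasFDerivAt Elam (SKaux.D1 μ ν C lam ψ) ψ := fun ψ => by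
    rw [hE']; exact SKaux.hasD1 hn0 μ ν C hlam (lam * Real.log n) ψ
  have hD2 : ∀ ψ, HasFDerivAt (fun ψ => SKaux.D1 μ ν C lam ψ) (SKaux.D2 μ C lam ψ) ψ :=
    fun ψ => SKaux.hasD2 hn0 μ ν C hlam ψ
  have hfd1 : fderiv ℝ Elam = fun ψ => SKaux.D1 μ ν C lam ψ := funext fun ψ => (hD1 ψ).fderiv
  constructor
  · intro ψ u hu hsum
    rw [hfd1, (hD2 ψ).fderiv]
    exact SKaux.quad_pos hn0 hlam hμ0 hμpos C ψ u hu hsum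
  · constructor
    · intro x hx y hy a b ha hb hab
      simp only [Set.mem_setOf_eq] at hx hy ⊢
      simp [Pi.add_apply, Pi.smul_apply, smul_eq_mul, Finset.sum_add_distrib,
        ← Finset.mul_sum, hx, hy]
    · intro x hx y hy hxy a b ha hb hab
      simp only [Set.mem_setOf_eq] at hx hy
      set u : Fin n → ℝ := y - x with hu
      have hune : u ≠ 0 := sub_ne_zero.mpr (Ne.symm hxy)
      have husum : ∑ j, u j = 0 := by
        simp [hu, Pi.sub_apply, Finset.sum_sub_distrib, hx, hy]
      set γ : ℝ → (Fin n → ℝ) := fun t => x + t • u with hγdef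
      have hγ : ∀ t, HasDerivAt γ u t := fun t => by
        rw [hγdef]; simpa using ((hasDerivAt_id t).smul_const u).const_add x
      set h : ℝ → ℝ := fun t => Elam (γ t) with hhdef
      have hd1 : ∀ t, HasDerivAt h (SKaux.D1 μ ν C lam (γ t) u) t := fun t =>
        (hD1 (γ t)).comp_hasDerivAt t (hγ t)
      have hderiv : deriv h = fun t => SKaux.D1 μ ν C lam (γ t) u :=
        funext fun t => (hd1 t).deriv
      have hd2 : ∀ t, HasDerivAt (fun t => SKaux.D1 μ ν C lam (γ t) u)
          (SKaux.D2 μ C lam (γ t) u u) t := fun t => by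
        have h1 : HasDerivAt (fun t => SKaux.D1 μ ν C lam (γ t)) (SKaux.D2 μ C lam (γ t) u) t :=
          (hD2 (γ t)).comp_hasDerivAt t (hγ t)
        have h2 := ((ContinuousLinearMap.apply ℝ ℝ u).hasFDerivAt).comp_hasDerivAt t h1
        simpa [Function.comp_def] using h2
      have hsc : StrictConvexOn ℝ Set.univ h := by
        apply strictConvexOn_univ_of_deriv2_pos
        · have hdiff : Differentiable ℝ h := fun t => (hd1 t).differentiableAt
          exact hdiff.continuous
        · intro t
          have hit : deriv^[2] h t = SKaux.D2 μ C lam (γ t) u u := by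
            show deriv (deriv h) t = _
            rw [hderiv]
            exact (hd2 t).deriv
          rw [hit]
          exact SKaux.quad_pos hn0 hlam hμ0 hμpos C (γ t) u hune husum
      have hkey := hsc.2 (Set.mem_univ (0:ℝ)) (Set.mem_univ (1:ℝ)) (by norm_num) ha hb hab
      have hb' : (a • (0:ℝ) + b • 1) = b := by simp
      rw [hb'] at hkey
      have hγ0 : γ 0 = x := by simp [hγdef]
      have hγ1 : γ 1 = y := by simp [hγdef, hu]
      have hγb : γ b = a • x + b • y := by
        have hab' : a = 1 - b := by linarith
        funext j
        simp only [hγdef, hu, hab', Pi.add_apply, Pi.smul_apply, Pi.sub_apply, smul_eq_mul]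
        ring
      simpa [hhdef, hγ0, hγ1, hγb, smul_eq_mul] using hkey
end
end

section
/- Let m, n ≥ 1, let μ ∈ ℝ^m and ν ∈ ℝⁿ be probability vectors with all entries of μ nonnegative and at least one entry of μ positive, let C = (c_{ij}) ∈ ℝ^{m×n} and λ > 0, and let E_λ(ψ) = λ Σ_{i=1}^m μ_i log(Σ_{j=1}^n e^{(ψ_j − c_{ij})/λ}) − Σ_{j=1}^n ν_j ψ_j − λ log n. If ψ₁ and ψ₂ both minimize E_λ over ℝⁿ, then there exists k ∈ ℝ with ψ₂ = ψ₁ + k·𝟙, where 𝟙 = (1,…,1). Consequently the induced approximate transport plan is unique: the matrix with entries μ_i · e^{(ψ_j − c_{ij})/λ} / (Σ_{k=1}^n e^{(ψ_k − c_{ik})/λ}) is the same for every minimizer ψ of E_λ. -/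
lemma cs_eq_case {n : ℕ} (x y : Fin n → ℝ) (hx : ∀ j, 0 < x j) (hy : ∀ j, 0 < y j)
    (hn : 0 < n)
    (h : (∑ j, x j * y j) ^ 2 = (∑ j, x j ^ 2) * (∑ j, y j ^ 2)) :
    ∃ t : ℝ, 0 < t ∧ ∀ j, y j = t * x j := by
  set X : EuclideanSpace ℝ (Fin n) := WithLp.toLp 2 x with hX
  set Y : EuclideanSpace ℝ (Fin n) := WithLp.toLp 2 y with hY
  have hXne : X ≠ 0 := by
    intro h0
    have := congrArg (fun v : EuclideanSpace ℝ (Fin n) => v ⟨0, hn⟩) h0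
    exact (hx ⟨0, hn⟩).ne' this
  have hYne : Y ≠ 0 := by
    intro h0
    have := congrArg (fun v : EuclideanSpace ℝ (Fin n) => v ⟨0, hn⟩) h0
    exact (hy ⟨0, hn⟩).ne' this
  have hnX : 0 < ‖X‖ := norm_pos_iff.mpr hXne
  have hnY : 0 < ‖Y‖ := norm_pos_iff.mpr hYne
  have hinner : (inner ℝ X Y : ℝ) = ∑ j, x j * y j := by
    simp [hX, hY, PiLp.inner_apply, RCLike.inner_apply, mul_comm]
  have hnormX : ‖X‖ = Real.sqrt (∑ j, x j ^ 2) := by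
    rw [EuclideanSpace.norm_eq]
    congr 1
    refine Finset.sum_congr rfl fun j _ => ?_
    rw [Real.norm_eq_abs, sq_abs]
  have hnormY : ‖Y‖ = Real.sqrt (∑ j, y j ^ 2) := by
    rw [EuclideanSpace.norm_eq]
    congr 1
    refine Finset.sum_congr rfl fun j _ => ?_
    rw [Real.norm_eq_abs, sq_abs]
  have hsumpos : 0 < ∑ j, x j * y j :=
    Finset.sum_pos (fun j _ => mul_pos (hx j) (hy j)) ⟨⟨0, hn⟩, Finset.mem_univ _⟩
  have heq : (inner ℝ X Y : ℝ) = ‖X‖ * ‖Y‖ := by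
    rw [hinner, hnormX, hnormY, ← Real.sqrt_mul (Finset.sum_nonneg fun j _ => sq_nonneg _), ← h,
      Real.sqrt_sq hsumpos.le]
  have hprop := inner_eq_norm_mul_iff_real.mp heq
  refine ⟨‖Y‖ / ‖X‖, div_pos hnY hnX, fun j => ?_⟩
  have h2 : (‖Y‖ • X) j = (‖X‖ • Y) j := congrArg (fun v : EuclideanSpace ℝ (Fin n) => v j) hprop
  simp only [PiLp.smul_apply, smul_eq_mul] at h2
  field_simp
  linarith [h2]

/-- Any two minimizers of the smoothed Kantorovich functional `E_λ` differ
by a constant vector `k·𝟙`, and consequently the induced approximate transport plan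
`μ_i e^{(ψ_j - c_{ij})/λ} / (∑ k, e^{(ψ_k - c_{ik})/λ})` is the same for every minimizer. -/
theorem smoothed_kantorovich_minimizers_unique_plan
    (m n : ℕ) (hm : 1 ≤ m) (hn : 1 ≤ n)
    (μ : Fin m → ℝ) (ν : Fin n → ℝ)
    (hμ0 : ∀ i, 0 ≤ μ i) (hμ1 : ∑ i, μ i = 1) (hμpos : ∃ i, 0 < μ i)
    (hν0 : ∀ j, 0 ≤ ν j) (hν1 : ∑ j, ν j = 1)
    (C : Fin m → Fin n → ℝ) (lam : ℝ) (hlam : 0 < lam)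
    (Elam : (Fin n → ℝ) → ℝ)
    (hElam : ∀ ψ, Elam ψ =
      lam * ∑ i, μ i * Real.log (∑ j, Real.exp ((ψ j - C i j) / lam))
        - ∑ j, ν j * ψ j - lam * Real.log n)
    (ψ₁ ψ₂ : Fin n → ℝ)
    (hmin₁ : ∀ φ, Elam ψ₁ ≤ Elam φ) (hmin₂ : ∀ φ, Elam ψ₂ ≤ Elam φ) :
    (∃ k : ℝ, ψ₂ = ψ₁ + k • (1 : Fin n → ℝ)) ∧
      ∀ i j, μ i * (Real.exp ((ψ₁ j - C i j) / lam) /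
          ∑ k, Real.exp ((ψ₁ k - C i k) / lam)) =
        μ i * (Real.exp ((ψ₂ j - C i j) / lam) /
          ∑ k, Real.exp ((ψ₂ k - C i k) / lam)) := by
  have hn0 : 0 < n := hn
  obtain ⟨i₀, hi₀⟩ := hμpos
  set ψm : Fin n → ℝ := fun j => (ψ₁ j + ψ₂ j) / 2 with hψm
  set x : Fin m → Fin n → ℝ := fun i j => Real.exp ((ψ₁ j - C i j) / (2 * lam)) with hxdef
  set y : Fin m → Fin n → ℝ := fun i j => Real.exp ((ψ₂ j - C i j) / (2 * lam)) with hydef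
  have hxpos : ∀ i j, 0 < x i j := fun i j => Real.exp_pos _
  have hypos : ∀ i j, 0 < y i j := fun i j => Real.exp_pos _
  have hS1 : ∀ i, (∑ j, Real.exp ((ψ₁ j - C i j) / lam)) = ∑ j, x i j ^ 2 := by
    intro i; refine Finset.sum_congr rfl fun j _ => ?_
    rw [hxdef, sq, ← Real.exp_add]
    congr 1; field_simp; ring
  have hS2 : ∀ i, (∑ j, Real.exp ((ψ₂ j - C i j) / lam)) = ∑ j, y i j ^ 2 := by
    intro i; refine Finset.sum_congr rfl fun j _ => ?_
    rw [hydef, sq, ← Real.exp_add]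
    congr 1; field_simp; ring
  have hSm : ∀ i, (∑ j, Real.exp ((ψm j - C i j) / lam)) = ∑ j, x i j * y i j := by
    intro i; refine Finset.sum_congr rfl fun j _ => ?_
    rw [hxdef, hydef, ← Real.exp_add]
    congr 1; field_simp; ring
  have hS1pos : ∀ i, 0 < ∑ j, Real.exp ((ψ₁ j - C i j) / lam) := fun i =>
    Finset.sum_pos (fun j _ => Real.exp_pos _) ⟨⟨0, hn0⟩, Finset.mem_univ _⟩
  have hS2pos : ∀ i, 0 < ∑ j, Real.exp ((ψ₂ j - C i j) / lam) := fun i =>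
    Finset.sum_pos (fun j _ => Real.exp_pos _) ⟨⟨0, hn0⟩, Finset.mem_univ _⟩
  have hSmpos : ∀ i, 0 < ∑ j, Real.exp ((ψm j - C i j) / lam) := fun i =>
    Finset.sum_pos (fun j _ => Real.exp_pos _) ⟨⟨0, hn0⟩, Finset.mem_univ _⟩
  -- Cauchy–Schwarz
  have hCS : ∀ i, (∑ j, Real.exp ((ψm j - C i j) / lam)) ^ 2 ≤
      (∑ j, Real.exp ((ψ₁ j - C i j) / lam)) * (∑ j, Real.exp ((ψ₂ j - C i j) / lam)) := by
    intro i
    rw [hSm, hS1, hS2]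
    exact Finset.sum_mul_sq_le_sq_mul_sq _ _ _
  -- log midpoint inequality
  have hlog : ∀ i, Real.log (∑ j, Real.exp ((ψm j - C i j) / lam)) ≤
      (Real.log (∑ j, Real.exp ((ψ₁ j - C i j) / lam))
        + Real.log (∑ j, Real.exp ((ψ₂ j - C i j) / lam))) / 2 := by
    intro i
    have h2 : Real.log ((∑ j, Real.exp ((ψm j - C i j) / lam)) ^ 2) ≤
        Real.log ((∑ j, Real.exp ((ψ₁ j - C i j) / lam))
          * (∑ j, Real.exp ((ψ₂ j - C i j) / lam))) :=
      Real.log_le_log (pow_pos (hSmpos i) 2) (hCS i)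
    rw [Real.log_pow, Real.log_mul (hS1pos i).ne' (hS2pos i).ne'] at h2
    push_cast at h2
    linarith
  set D : Fin m → ℝ := fun i =>
    (Real.log (∑ j, Real.exp ((ψ₁ j - C i j) / lam))
      + Real.log (∑ j, Real.exp ((ψ₂ j - C i j) / lam))) / 2
      - Real.log (∑ j, Real.exp ((ψm j - C i j) / lam)) with hDdef
  have hDnn : ∀ i, 0 ≤ D i := fun i => by
    have := hlog i; simp only [hDdef]; linarith
  have hlin : (∑ j, ν j * ψm j) = ((∑ j, ν j * ψ₁ j) + ∑ j, ν j * ψ₂ j) / 2 := by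
    rw [← Finset.sum_add_distrib, Finset.sum_div]
    refine Finset.sum_congr rfl fun j _ => ?_
    simp only [hψm]; ring
  have hsplit : ∑ i, μ i * D i =
      ((∑ i, μ i * Real.log (∑ j, Real.exp ((ψ₁ j - C i j) / lam)))
        + ∑ i, μ i * Real.log (∑ j, Real.exp ((ψ₂ j - C i j) / lam))) / 2
      - ∑ i, μ i * Real.log (∑ j, Real.exp ((ψm j - C i j) / lam)) := by
    rw [← Finset.sum_add_distrib, Finset.sum_div, ← Finset.sum_sub_distrib]
    refine Finset.sum_congr rfl fun i _ => ?_
    simp only [hDdef]; ring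
  have hE12 : Elam ψ₁ = Elam ψ₂ := le_antisymm (hmin₁ ψ₂) (hmin₂ ψ₁)
  have hEm : Elam ψ₁ ≤ Elam ψm := hmin₁ ψm
  have hkey : lam * ∑ i, μ i * D i = (Elam ψ₁ + Elam ψ₂) / 2 - Elam ψm := by
    rw [hsplit, hElam ψ₁, hElam ψ₂, hElam ψm, hlin]; ring
  have hsum0 : ∑ i, μ i * D i ≤ 0 := by
    nlinarith [hkey, hEm, hE12, hlam]
  have hsum_eq : ∑ i, μ i * D i = 0 :=
    le_antisymm hsum0 (Finset.sum_nonneg fun i _ => mul_nonneg (hμ0 i) (hDnn i))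
  have hD0 : D i₀ = 0 := by
    have hterm := (Finset.sum_eq_zero_iff_of_nonneg
      (fun i _ => mul_nonneg (hμ0 i) (hDnn i))).mp hsum_eq i₀ (Finset.mem_univ _)
    exact (mul_eq_zero.mp hterm).resolve_left hi₀.ne' |>.symm ▸ rfl
  -- equality in Cauchy–Schwarz at i₀
  have hCSeq : (∑ j, x i₀ j * y i₀ j) ^ 2 = (∑ j, x i₀ j ^ 2) * (∑ j, y i₀ j ^ 2) := by
    have hlogeq : 2 * Real.log (∑ j, Real.exp ((ψm j - C i₀ j) / lam)) =
        Real.log (∑ j, Real.exp ((ψ₁ j - C i₀ j) / lam))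
          + Real.log (∑ j, Real.exp ((ψ₂ j - C i₀ j) / lam)) := by
      simp only [hDdef] at hD0; linarith
    have h1 : Real.log ((∑ j, Real.exp ((ψm j - C i₀ j) / lam)) ^ 2) =
        Real.log ((∑ j, Real.exp ((ψ₁ j - C i₀ j) / lam))
          * (∑ j, Real.exp ((ψ₂ j - C i₀ j) / lam))) := by
      rw [Real.log_pow, Real.log_mul (hS1pos i₀).ne' (hS2pos i₀).ne']
      push_cast; linarith
    have h2 : (∑ j, Real.exp ((ψm j - C i₀ j) / lam)) ^ 2 =
        (∑ j, Real.exp ((ψ₁ j - C i₀ j) / lam)) * (∑ j, Real.exp ((ψ₂ j - C i₀ j) / lam)) := by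
      have e1 := Real.exp_log (pow_pos (hSmpos i₀) 2)
      have e2 := Real.exp_log (mul_pos (hS1pos i₀) (hS2pos i₀))
      rw [← e1, ← e2, h1]
    rw [hSm, hS1, hS2] at h2
    exact h2
  obtain ⟨t, ht, hty⟩ := cs_eq_case (x i₀) (y i₀) (hxpos i₀) (hypos i₀) hn0 hCSeq
  -- the constant
  have hconst : ∀ j, ψ₂ j = ψ₁ j + 2 * lam * Real.log t := by
    intro j
    have h3 := congrArg Real.log (hty j)
    rw [hydef, hxdef] at h3
    simp only at h3
    rw [Real.log_exp, Real.log_mul ht.ne' (Real.exp_ne_zero _), Real.log_exp] at h3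
    have hl2 : (2 : ℝ) * lam ≠ 0 := by positivity
    field_simp at h3
    linarith
  have hfirst : ∃ k : ℝ, ψ₂ = ψ₁ + k • (1 : Fin n → ℝ) := by
    refine ⟨2 * lam * Real.log t, funext fun j => ?_⟩
    simp only [Pi.add_apply, Pi.smul_apply, Pi.one_apply, smul_eq_mul, mul_one]
    exact hconst j
  refine ⟨hfirst, fun i j => ?_⟩
  obtain ⟨k, hk⟩ := hfirst
  have hkj : ∀ j, ψ₂ j = ψ₁ j + k := fun j => by
    rw [hk]; simp
  have hexp2 : ∀ j', Real.exp ((ψ₂ j' - C i j') / lam) =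
      Real.exp (k / lam) * Real.exp ((ψ₁ j' - C i j') / lam) := by
    intro j'
    rw [← Real.exp_add, hkj j']
    congr 1
    field_simp
    ring
  have hsum2 : (∑ k', Real.exp ((ψ₂ k' - C i k') / lam)) =
      Real.exp (k / lam) * ∑ k', Real.exp ((ψ₁ k' - C i k') / lam) := by
    rw [Finset.mul_sum]
    exact Finset.sum_congr rfl fun j' _ => hexp2 j'
  rw [hexp2 j, hsum2, mul_div_mul_left _ _ (Real.exp_ne_zero _)]
end

section
/- Let m, n ≥ 1, μ ∈ ℝ^m and ν ∈ ℝⁿ be probability vectors, C = (c_{ij}) ∈ ℝ^{m×n}, λ > 0. Define E(ψ) = Σ_{i=1}^m μ_i max_{1≤j≤n}(ψ_j − c_{ij}) − Σ_{j=1}^n ν_j ψ_j and E_λ(ψ) = λ Σ_{i=1}^m μ_i log(Σ_{j=1}^n e^{(ψ_j − c_{ij})/λ}) − Σ_{j=1}^n ν_j ψ_j − λ log n. If ψ* minimizes E over ℝⁿ and ψ_λ* minimizes E_λ over ℝⁿ, then |E(ψ*) − E_λ(ψ_λ*)| ≤ 2λ log n. -/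
/-- Log-sum-exp bounds: the smoothed max is between the max and max + λ log n. -/
lemma lse_bounds {n : ℕ} (hne : (Finset.univ : Finset (Fin n)).Nonempty)
    (f : Fin n → ℝ) (lam : ℝ) (hlam : 0 < lam) :
    Finset.univ.sup' hne f ≤ lam * Real.log (∑ j, Real.exp (f j / lam)) ∧
    lam * Real.log (∑ j, Real.exp (f j / lam)) ≤
      Finset.univ.sup' hne f + lam * Real.log n := by
  set M := Finset.univ.sup' hne f with hM
  have hpos : (0:ℝ) < ∑ j, Real.exp (f j / lam) :=
    Finset.sum_pos (fun j _ => Real.exp_pos _) hne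
  constructor
  · obtain ⟨j0, _, hj0⟩ := Finset.exists_mem_eq_sup' hne f
    have h1 : Real.exp (M / lam) ≤ ∑ j, Real.exp (f j / lam) := by
      rw [hM, hj0]
      exact Finset.single_le_sum (f := fun j => Real.exp (f j / lam))
        (fun j _ => (Real.exp_pos _).le) (Finset.mem_univ j0)
    have h2 : M / lam ≤ Real.log (∑ j, Real.exp (f j / lam)) :=
      (Real.le_log_iff_exp_le hpos).mpr h1
    calc M = lam * (M / lam) := by field_simp
    _ ≤ lam * Real.log (∑ j, Real.exp (f j / lam)) := by
        exact mul_le_mul_of_nonneg_left h2 hlam.le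
  · have h1 : ∑ j, Real.exp (f j / lam) ≤ (n : ℝ) * Real.exp (M / lam) := by
      calc ∑ j, Real.exp (f j / lam) ≤ ∑ _j : Fin n, Real.exp (M / lam) := by
            apply Finset.sum_le_sum
            intro j _
            exact Real.exp_le_exp.mpr (div_le_div_of_nonneg_right
              (Finset.le_sup' f (Finset.mem_univ j)) hlam.le)
      _ = (n : ℝ) * Real.exp (M / lam) := by simp [mul_comm]
    have hn0 : (0:ℝ) < n := by
      have := hne
      have : 0 < n := Fin.pos_iff_nonempty.mpr (Finset.univ_nonempty_iff.mp hne)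
      exact_mod_cast this
    have h2 : Real.log (∑ j, Real.exp (f j / lam)) ≤ Real.log n + M / lam := by
      calc Real.log (∑ j, Real.exp (f j / lam)) ≤ Real.log ((n:ℝ) * Real.exp (M / lam)) :=
            Real.log_le_log hpos h1
      _ = Real.log n + M / lam := by rw [Real.log_mul hn0.ne' (Real.exp_pos _).ne',
            Real.log_exp]
    calc lam * Real.log (∑ j, Real.exp (f j / lam)) ≤ lam * (Real.log n + M / lam) :=
          mul_le_mul_of_nonneg_left h2 hlam.le
    _ = M + lam * Real.log n := by field_simp; ring

/-- (Theorem 8 of the paper.) If ψ* minimizes the dual Kantorovich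
functional E and ψ_λ* minimizes its Nesterov smoothing E_λ, then
|E(ψ*) − E_λ(ψ_λ*)| ≤ 2 λ log n. -/
theorem kantorovich_smoothing_approximation_error
    (m n : ℕ) (hm : 1 ≤ m) (hn : 1 ≤ n)
    (μ : Fin m → ℝ) (ν : Fin n → ℝ)
    (hμ0 : ∀ i, 0 ≤ μ i) (hμ1 : ∑ i, μ i = 1)
    (hν0 : ∀ j, 0 ≤ ν j) (hν1 : ∑ j, ν j = 1)
    (C : Fin m → Fin n → ℝ) (lam : ℝ) (hlam : 0 < lam)
    (E Elam : (Fin n → ℝ) → ℝ)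
    (hE : ∀ ψ, E ψ =
      ∑ i, μ i * Finset.univ.sup'
          (Finset.univ_nonempty_iff.mpr (Fin.pos_iff_nonempty.mp hn))
          (fun j => ψ j - C i j)
        - ∑ j, ν j * ψ j)
    (hElam : ∀ ψ, Elam ψ =
      lam * ∑ i, μ i * Real.log (∑ j, Real.exp ((ψ j - C i j) / lam))
        - ∑ j, ν j * ψ j - lam * Real.log n)
    (ψs ψlam : Fin n → ℝ)
    (hmin : ∀ φ, E ψs ≤ E φ) (hminlam : ∀ φ, Elam ψlam ≤ Elam φ) :
    |E ψs - Elam ψlam| ≤ 2 * lam * Real.log n := by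
  have hne : (Finset.univ : Finset (Fin n)).Nonempty :=
    Finset.univ_nonempty_iff.mpr (Fin.pos_iff_nonempty.mp hn)
  have hlogn : 0 ≤ Real.log n := by
    apply Real.log_nonneg; exact_mod_cast hn
  -- pointwise bounds: E ψ - lam log n ≤ Elam ψ ≤ E ψ
  have key : ∀ ψ, E ψ - lam * Real.log n ≤ Elam ψ ∧ Elam ψ ≤ E ψ := by
    intro ψ
    rw [hE, hElam]
    have hub : ∀ i : Fin m,
        Finset.univ.sup' hne (fun j => ψ j - C i j) ≤
          lam * Real.log (∑ j, Real.exp ((ψ j - C i j) / lam)) :=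
      fun i => (lse_bounds hne (fun j => ψ j - C i j) lam hlam).1
    have hlb : ∀ i : Fin m,
        lam * Real.log (∑ j, Real.exp ((ψ j - C i j) / lam)) ≤
          Finset.univ.sup' hne (fun j => ψ j - C i j) + lam * Real.log n :=
      fun i => (lse_bounds hne (fun j => ψ j - C i j) lam hlam).2
    constructor
    · have : ∑ i, μ i * Finset.univ.sup' hne (fun j => ψ j - C i j) ≤
          ∑ i, μ i * (lam * Real.log (∑ j, Real.exp ((ψ j - C i j) / lam))) :=
        Finset.sum_le_sum fun i _ => mul_le_mul_of_nonneg_left (hub i) (hμ0 i)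
      have heq : ∑ i, μ i * (lam * Real.log (∑ j, Real.exp ((ψ j - C i j) / lam))) =
          lam * ∑ i, μ i * Real.log (∑ j, Real.exp ((ψ j - C i j) / lam)) := by
        rw [Finset.mul_sum]; congr 1; ext i; ring
      linarith [this, heq ▸ this]
    · have : ∑ i, μ i * (lam * Real.log (∑ j, Real.exp ((ψ j - C i j) / lam))) ≤
          ∑ i, μ i * (Finset.univ.sup' hne (fun j => ψ j - C i j) + lam * Real.log n) :=
        Finset.sum_le_sum fun i _ => mul_le_mul_of_nonneg_left (hlb i) (hμ0 i)
      have heq1 : ∑ i, μ i * (lam * Real.log (∑ j, Real.exp ((ψ j - C i j) / lam))) =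
          lam * ∑ i, μ i * Real.log (∑ j, Real.exp ((ψ j - C i j) / lam)) := by
        rw [Finset.mul_sum]; congr 1; ext i; ring
      have heq2 : ∑ i, μ i * (Finset.univ.sup' hne (fun j => ψ j - C i j) + lam * Real.log n) =
          (∑ i, μ i * Finset.univ.sup' hne (fun j => ψ j - C i j)) + lam * Real.log n := by
        simp only [mul_add]
        rw [Finset.sum_add_distrib, ← Finset.sum_mul, hμ1, one_mul]
      rw [heq1, heq2] at this
      linarith
  have h1 : Elam ψlam ≤ E ψs := le_trans (hminlam ψs) (key ψs).2
  have h2 : E ψs ≤ Elam ψlam + lam * Real.log n := by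
    have := (key ψlam).1
    linarith [hmin ψlam]
  rw [abs_le]
  constructor <;> nlinarith [mul_nonneg hlam.le hlogn]
end

section
/- Let m, n ≥ 1, μ ∈ ℝ^m and ν ∈ ℝⁿ be probability vectors, C = (c_{ij}) ∈ ℝ^{m×n}, λ > 0. Define E(ψ) = Σ_{i=1}^m μ_i max_{1≤j≤n}(ψ_j − c_{ij}) − Σ_{j=1}^n ν_j ψ_j and E_λ(ψ) = λ Σ_{i=1}^m μ_i log(Σ_{j=1}^n e^{(ψ_j − c_{ij})/λ}) − Σ_{j=1}^n ν_j ψ_j − λ log n. If ψ* minimizes E over ℝⁿ and ψ_λ* minimizes E_λ over ℝⁿ, then 0 ≤ E(ψ_λ*) − E(ψ*) ≤ 2λ log n. -/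
lemma softmax_bounds (n : ℕ) (hn : 1 ≤ n) (lam : ℝ) (hlam : 0 < lam)
    (ne : (Finset.univ : Finset (Fin n)).Nonempty) (g : Fin n → ℝ) :
    Finset.univ.sup' ne g ≤ lam * Real.log (∑ j, Real.exp (g j / lam)) ∧
    lam * Real.log (∑ j, Real.exp (g j / lam)) ≤ Finset.univ.sup' ne g + lam * Real.log n := by
  set S := Finset.univ.sup' ne g with hS
  have hsumpos : 0 < ∑ j, Real.exp (g j / lam) := by
    apply Finset.sum_pos (fun j _ => Real.exp_pos _) ne
  constructor
  · obtain ⟨j0, _, hj0⟩ := Finset.exists_mem_eq_sup' ne g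
    have h1 : Real.exp (g j0 / lam) ≤ ∑ j, Real.exp (g j / lam) :=
      Finset.single_le_sum (f := fun j => Real.exp (g j / lam))
        (fun j _ => (Real.exp_pos _).le) (Finset.mem_univ j0)
    have h2 : g j0 / lam ≤ Real.log (∑ j, Real.exp (g j / lam)) :=
      (Real.le_log_iff_exp_le hsumpos).mpr h1
    have := mul_le_mul_of_nonneg_left h2 hlam.le
    rw [mul_div_cancel₀ _ hlam.ne'] at this
    rw [hS, hj0]
    exact this
  · have h1 : (∑ j, Real.exp (g j / lam)) ≤ n * Real.exp (S / lam) := by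
      calc (∑ j, Real.exp (g j / lam)) ≤ ∑ _j : Fin n, Real.exp (S / lam) := by
            apply Finset.sum_le_sum
            intro j _
            exact Real.exp_le_exp.mpr (div_le_div_of_nonneg_right (Finset.le_sup' g (Finset.mem_univ j)) hlam.le |>.trans_eq rfl)
        _ = n * Real.exp (S / lam) := by simp [mul_comm]
    have h2 : Real.log (∑ j, Real.exp (g j / lam)) ≤ Real.log n + S / lam := by
      have := Real.log_le_log hsumpos h1
      rwa [Real.log_mul (by positivity) (Real.exp_pos _).ne', Real.log_exp] at this
    have := mul_le_mul_of_nonneg_left h2 hlam.le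
    rw [mul_add, mul_div_cancel₀ _ hlam.ne'] at this
    linarith

/-- If ψ* minimizes the dual Kantorovich functional E and ψ_λ* minimizes
its Nesterov smoothing E_λ, then 0 ≤ E(ψ_λ*) − E(ψ*) ≤ 2 λ log n. -/
theorem kantorovich_value_at_smoothed_minimizer
    (m n : ℕ) (hm : 1 ≤ m) (hn : 1 ≤ n)
    (μ : Fin m → ℝ) (ν : Fin n → ℝ)
    (hμ0 : ∀ i, 0 ≤ μ i) (hμ1 : ∑ i, μ i = 1)
    (hν0 : ∀ j, 0 ≤ ν j) (hν1 : ∑ j, ν j = 1)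
    (C : Fin m → Fin n → ℝ) (lam : ℝ) (hlam : 0 < lam)
    (E Elam : (Fin n → ℝ) → ℝ)
    (hE : ∀ ψ, E ψ =
      ∑ i, μ i * Finset.univ.sup'
          (Finset.univ_nonempty_iff.mpr (Fin.pos_iff_nonempty.mp hn))
          (fun j => ψ j - C i j)
        - ∑ j, ν j * ψ j)
    (hElam : ∀ ψ, Elam ψ =
      lam * ∑ i, μ i * Real.log (∑ j, Real.exp ((ψ j - C i j) / lam))
        - ∑ j, ν j * ψ j - lam * Real.log n)
    (ψs ψlam : Fin n → ℝ)
    (hmin : ∀ φ, E ψs ≤ E φ) (hminlam : ∀ φ, Elam ψlam ≤ Elam φ) :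
    0 ≤ E ψlam - E ψs ∧ E ψlam - E ψs ≤ 2 * lam * Real.log n := by
  have ne := Finset.univ_nonempty_iff.mpr (Fin.pos_iff_nonempty.mp hn)
  have hlogn : 0 ≤ Real.log n := Real.log_nonneg (by exact_mod_cast hn)
  -- key sandwich: ∀ ψ, Elam ψ ≤ E ψ ∧ E ψ ≤ Elam ψ + lam * log n
  have key : ∀ ψ : Fin n → ℝ, Elam ψ ≤ E ψ ∧ E ψ ≤ Elam ψ + lam * Real.log n := by
    intro ψ
    set S : Fin m → ℝ := fun i => Finset.univ.sup' ne (fun j => ψ j - C i j) with hSdef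
    set L : Fin m → ℝ := fun i => Real.log (∑ j, Real.exp ((ψ j - C i j) / lam)) with hLdef
    have hb : ∀ i, S i ≤ lam * L i ∧ lam * L i ≤ S i + lam * Real.log n := fun i =>
      softmax_bounds n hn lam hlam ne (fun j => ψ j - C i j)
    have hsum1 : ∑ i, μ i * S i ≤ ∑ i, μ i * (lam * L i) :=
      Finset.sum_le_sum (fun i _ => mul_le_mul_of_nonneg_left (hb i).1 (hμ0 i))
    have hsum2 : ∑ i, μ i * (lam * L i) ≤ ∑ i, μ i * (S i + lam * Real.log n) :=
      Finset.sum_le_sum (fun i _ => mul_le_mul_of_nonneg_left (hb i).2 (hμ0 i))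
    have hdist : ∑ i, μ i * (S i + lam * Real.log n)
        = (∑ i, μ i * S i) + lam * Real.log n := by
      simp only [mul_add]
      rw [Finset.sum_add_distrib, ← Finset.sum_mul, hμ1, one_mul]
    have hmulL : ∑ i, μ i * (lam * L i) = lam * ∑ i, μ i * L i := by
      rw [Finset.mul_sum]; apply Finset.sum_congr rfl; intro i _; ring
    rw [hE ψ, hElam ψ]
    constructor
    · have := hsum2
      rw [hmulL, hdist] at this
      linarith
    · have := hsum1
      rw [hmulL] at this
      linarith
  have h1 : E ψlam ≤ Elam ψlam + lam * Real.log n := (key ψlam).2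
  have h2 : Elam ψlam ≤ Elam ψs := hminlam ψs
  have h3 : Elam ψs ≤ E ψs := (key ψs).1
  have h4 : E ψs ≤ E ψlam := hmin ψlam
  constructor
  · linarith
  · nlinarith [hlam.le, hlogn]
end
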